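/- arXiv:1109.0078 — 6 statements merged into one kernel-verified Lean document; each statement's English description precedes it below -/
import Mathlib

section
/- Let B be an integer matrix whose columns form a lattice basis of ker_Z(A). Then the columns of the block matrix B^(r), having r block rows where for k = 1,...,r-1 the k-th block column has B in block row k and -B in block row r and zeros elsewhere, form a lattice basis of ker_Z(Λ^(r)(A)), the r-th Lawrence configuration of A. -/
open Matrix BigOperators

/-- The `r`-th Lawrence configuration of `A`: the first `r-1` block rows are
`(0,…,0,A,0,…,0)` (with `A` in block position `k`), and the last block row is `(I,…,I)`. -/
def LawrenceR (r m n : ℕ) (A : Matrix (Fin m) (Fin n) ℤ) :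
    Matrix ((Fin (r - 1) × Fin m) ⊕ Fin n) (Fin r × Fin n) ℤ :=
  fun p q =>
    Sum.elim (fun ka : Fin (r - 1) × Fin m =>
        if (q.1 : ℕ) = (ka.1 : ℕ) then A ka.2 q.2 else 0)
      (fun i : Fin n => if q.2 = i then 1 else 0) p

/-- Column `(k, j)` of the matrix `B^(r)`: block `B` in block row `k`, `-B` in the last
block row `r-1`, and zeros elsewhere. -/
def BrCol {r n l : ℕ} (B : Matrix (Fin n) (Fin l) ℤ) (k : Fin (r - 1)) (j : Fin l) :
    Fin r × Fin n → ℤ :=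
  fun q =>
    if (q.1 : ℕ) = (k : ℕ) then B q.2 j
    else if (q.1 : ℕ) = r - 1 then -B q.2 j else 0

lemma sum_ite_val {r : ℕ} (t : Fin r) (f : Fin r → ℤ) :
    ∑ q : Fin r, (if (q : ℕ) = (t : ℕ) then f q else 0) = f t := by
  rw [Finset.sum_eq_single t]
  · simp
  · intro b _ hb
    simp only [ite_eq_right_iff]
    intro h; exact absurd (Fin.ext h) hb
  · simp

lemma lawrence_row_inl (s m n : ℕ) (A : Matrix (Fin m) (Fin n) ℤ)
    (v : Fin (s+2) × Fin n → ℤ) (k' : Fin (s+1)) (a : Fin m) :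
    (LawrenceR (s+2) m n A).mulVec v (Sum.inl (k', a)) =
      ∑ q2 : Fin n, A a q2 * v (k'.castSucc, q2) := by
  simp only [mulVec, dotProduct, LawrenceR, Sum.elim_inl, Fintype.sum_prod_type, ite_mul,
    zero_mul]
  rw [Finset.sum_comm]
  congr 1; funext q2
  have := sum_ite_val (r := s+2) k'.castSucc (fun q1 => A a q2 * v (q1, q2))
  simpa using this

lemma lawrence_row_inr (s m n : ℕ) (A : Matrix (Fin m) (Fin n) ℤ)
    (v : Fin (s+2) × Fin n → ℤ) (i : Fin n) :
    (LawrenceR (s+2) m n A).mulVec v (Sum.inr i) =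
      ∑ q1 : Fin (s+2), v (q1, i) := by
  simp only [mulVec, dotProduct, LawrenceR, Sum.elim_inr, Fintype.sum_prod_type, ite_mul,
    one_mul, zero_mul]
  congr 1; funext q1
  simp [Finset.sum_ite_eq']

lemma brcol_castSucc {s n l : ℕ} (B : Matrix (Fin n) (Fin l) ℤ) (k : Fin (s+1)) (j : Fin l)
    (q1 : Fin (s+1)) (i : Fin n) :
    BrCol (r := s+2) B k j (q1.castSucc, i) = if (q1 : ℕ) = (k : ℕ) then B i j else 0 := by
  have h1 : ((q1.castSucc : Fin (s+2)) : ℕ) = (q1 : ℕ) := rfl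
  by_cases h : (q1 : ℕ) = (k : ℕ)
  · simp [BrCol, h1, h]
  · have h2 : ¬ (q1 : ℕ) = s + 1 := by omega
    simp only [BrCol, h1, if_neg h, ite_eq_right_iff]
    intro hq
    exact absurd hq h2

lemma brcol_last {s n l : ℕ} (B : Matrix (Fin n) (Fin l) ℤ) (k : Fin (s+1)) (j : Fin l)
    (i : Fin n) :
    BrCol (r := s+2) B k j (Fin.last (s+1), i) = -B i j := by
  have hk : (s + 1 : ℕ) ≠ (k : ℕ) := by omega
  simp [BrCol, Fin.last, hk]

/-- If the columns of `B` form a lattice basis of `ker_Z A`, then the columns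
of `B^(r)` form a lattice basis of the integer kernel of the `r`-th Lawrence configuration. -/
theorem lattice_basis_higher_lawrence (r m n l : ℕ) (hr : 2 ≤ r)
    (A : Matrix (Fin m) (Fin n) ℤ) (B : Matrix (Fin n) (Fin l) ℤ)
    (hker : ∀ j : Fin l, A.mulVec (fun i => B i j) = 0)
    (hgen : ∀ z : Fin n → ℤ, A.mulVec z = 0 →
      ∃ c : Fin l → ℤ, z = fun i => ∑ j : Fin l, c j * B i j) :
    (∀ (k : Fin (r - 1)) (j : Fin l),
      (LawrenceR r m n A).mulVec (BrCol B k j) = 0) ∧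
    (∀ z : Fin r × Fin n → ℤ, (LawrenceR r m n A).mulVec z = 0 →
      ∃ c : Fin (r - 1) × Fin l → ℤ,
        z = fun q => ∑ p : Fin (r - 1) × Fin l, c p * BrCol B p.1 p.2 q) := by
  obtain ⟨s, rfl⟩ : ∃ s, r = s + 2 := ⟨r - 2, by omega⟩
  constructor
  · intro k j
    funext p
    rcases p with ⟨k', a⟩ | i
    · rw [lawrence_row_inl]
      simp only [brcol_castSucc]
      by_cases h : (k' : ℕ) = (k : ℕ)
      · simp only [h, if_pos rfl, Pi.zero_apply]
        have := congrFun (hker j) a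
        simpa [mulVec, dotProduct] using this
      · simp [h]
    · rw [lawrence_row_inr]
      rw [Fin.sum_univ_castSucc]
      simp only [brcol_castSucc, brcol_last, Pi.zero_apply]
      rw [sum_ite_val (r := s+1) k (fun _ => B i j)]
      ring
  · intro z hz
    have hblock : ∀ k : Fin (s+1), A.mulVec (fun i => z (k.castSucc, i)) = 0 := by
      intro k
      funext a
      have := congrFun hz (Sum.inl (k, a))
      rw [lawrence_row_inl] at this
      simpa [mulVec, dotProduct] using this
    choose c hc using fun k : Fin (s+1) => hgen _ (hblock k)
    have hzk : ∀ (k : Fin (s+1)) (i : Fin n), z (k.castSucc, i) = ∑ j, c k j * B i j :=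
      fun k i => congrFun (hc k) i
    have hlast : ∀ i : Fin n, z (Fin.last (s+1), i) = -∑ k : Fin (s+1), z (k.castSucc, i) := by
      intro i
      have := congrFun hz (Sum.inr i)
      rw [lawrence_row_inr, Fin.sum_univ_castSucc] at this
      have h0 : (0 : (((Fin (s+2-1) × Fin m) ⊕ Fin n) → ℤ)) (Sum.inr i) = 0 := rfl
      rw [h0] at this
      linarith [this]
    refine ⟨fun p => c p.1 p.2, ?_⟩
    funext q
    obtain ⟨q1, i⟩ := q
    rw [Fintype.sum_prod_type]
    induction q1 using Fin.lastCases with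
    | last =>
      simp only [brcol_last, hlast i, mul_neg]
      rw [← Finset.sum_neg_distrib]
      show ∑ x : Fin (s+1), -z (x.castSucc, i) =
        ∑ x : Fin (s+1), ∑ j : Fin l, -(c x j * B i j)
      refine Finset.sum_congr rfl fun k _ => ?_
      rw [hzk]
      exact (Finset.sum_neg_distrib _).symm
    | cast k0 =>
      simp only [brcol_castSucc]
      rw [hzk]
      symm
      show (∑ x : Fin (s+1), ∑ j : Fin l, c x j * if (k0 : ℕ) = (x : ℕ) then B i j else 0)
        = ∑ j : Fin l, c k0 j * B i j
      rw [Finset.sum_eq_single k0]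
      · refine Finset.sum_congr rfl fun j _ => ?_
        simp
      · intro b _ hb
        have hb' : (k0 : ℕ) ≠ (b : ℕ) := fun h => hb (Fin.ext h.symm)
        simp [hb']
      · simp
end

section
/- Let A be an integer matrix and let L = {z1, ..., zK} be a lattice basis of ker_Z(A). Suppose x and y are nonnegative integer vectors with Ax = Ay. If every coordinate of x is sufficiently large (specifically, at least the sum over the moves used, of the absolute values of the corresponding coordinates), then there is a path x = x_0, x_1, ..., x_m = y such that each x_j is a nonnegative integer vector with A x_j = Ax and each step x_{j+1} - x_j is ± an element of L. Concretely: if y - x = Σ_{k=1}^K α_k z_k with α_k ∈ Z, and for every coordinate i we have x(i) ≥ Σ_k |α_k| |z_k(i)|, then such a connecting path of nonnegative tables exists. -/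
open Matrix BigOperators

theorem key_path (m n K : ℕ) (A : Matrix (Fin m) (Fin n) ℤ)
    (L : Fin K → (Fin n → ℤ)) (hL : ∀ k, A.mulVec (L k) = 0)
    (y : Fin n → ℤ) :
    ∀ (s : ℕ) (x : Fin n → ℤ) (α : Fin K → ℤ),
      (∑ k, (α k).natAbs) = s →
      (∀ i, 0 ≤ x i) →
      (∀ i, y i - x i = ∑ k, α k * L k i) →
      (∀ i, ∑ k, |α k| * |L k i| ≤ x i) →
      ∃ (N : ℕ) (p : Fin (N + 1) → Fin n → ℤ),
        p 0 = x ∧ p (Fin.last N) = y ∧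
        (∀ j, (∀ i, 0 ≤ p j i) ∧ A.mulVec (p j) = A.mulVec x) ∧
        ∀ j : Fin N, ∃ k, (∀ i, p j.succ i - p j.castSucc i = L k i) ∨
          (∀ i, p j.succ i - p j.castSucc i = -L k i) := by
  intro s
  induction s with
  | zero =>
    intro x α hsum hx hα hbig
    have hz : ∀ k, α k = 0 := by
      intro k
      have := Finset.sum_eq_zero_iff.mp hsum k (Finset.mem_univ k)
      omega
    have hxy : y = x := by
      funext i
      have := hα i
      simp [hz] at this
      linarith
    exact ⟨0, fun _ => x, rfl, hxy.symm ▸ rfl, fun j => ⟨hx, rfl⟩, fun j => j.elim0⟩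
  | succ s ih =>
    intro x α hsum hx hα hbig
    have hne : ∃ k0, α k0 ≠ 0 := by
      by_contra h
      push_neg at h
      simp [h] at hsum
    obtain ⟨k0, hk0⟩ := hne
    set e : ℤ := if 0 < α k0 then 1 else -1 with he_def
    have he : e = 1 ∨ e = -1 := by
      by_cases h : 0 < α k0 <;> simp [he_def, h]
    have hdec : (α k0 - e).natAbs + 1 = (α k0).natAbs := by
      by_cases h : 0 < α k0 <;> simp [he_def, h] <;> omega
    set x' : Fin n → ℤ := x + e • L k0 with hx'_def
    set α' : Fin K → ℤ := Function.update α k0 (α k0 - e) with hα'_def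
    -- sum splitting helper
    have hsplit : ∀ {M : Type} [AddCommMonoid M] (F : Fin K → M),
        ∑ k, F k = (∑ k ∈ Finset.univ \ {k0}, F k) + F k0 := by
      intro M _ F
      exact (Finset.sum_eq_sum_sdiff_singleton_add (Finset.mem_univ k0) F)
    have hoff : ∀ k, k ≠ k0 → α' k = α k := by
      intro k hk; simp [hα'_def, Function.update_of_ne hk]
    have hat : α' k0 = α k0 - e := by simp [hα'_def]
    have hsum' : ∑ k, (α' k).natAbs = s := by
      have h1 := hsplit (fun k => (α' k).natAbs)
      have h2 := hsplit (fun k => (α k).natAbs)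
      have h3 : ∑ k ∈ Finset.univ \ {k0}, (α' k).natAbs
          = ∑ k ∈ Finset.univ \ {k0}, (α k).natAbs := by
        apply Finset.sum_congr rfl
        intro k hk
        rw [hoff k (by simpa using (Finset.mem_sdiff.mp hk).2)]
      rw [h1, h3, hat]
      rw [h2] at hsum
      omega
    have habs : |α' k0| = |α k0| - 1 := by
      rw [hat]
      by_cases h : 0 < α k0
      · simp only [he_def, if_pos h]
        rw [abs_of_pos h, abs_of_nonneg (by omega)]
      · have h' : α k0 < 0 := by omega
        simp only [he_def, if_neg h]
        rw [abs_of_neg h', abs_of_nonpos (by omega)]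
        ring
    have hxpt : ∀ i, x' i = x i + e * L k0 i := by
      intro i; simp [hx'_def]
    have heL : ∀ i, -|L k0 i| ≤ e * L k0 i ∧ e * L k0 i ≤ |L k0 i| := by
      intro i
      have h1 : |e * L k0 i| = |L k0 i| := by
        rcases he with h | h <;> rw [h] <;> simp
      exact ⟨by rw [← h1]; exact neg_abs_le _, by rw [← h1]; exact le_abs_self _⟩
    have hbig' : ∀ i, ∑ k, |α' k| * |L k i| ≤ x' i := by
      intro i
      have h1 := hsplit (fun k => |α' k| * |L k i|)
      have h2 := hsplit (fun k => |α k| * |L k i|)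
      have h3 : ∑ k ∈ Finset.univ \ {k0}, |α' k| * |L k i|
          = ∑ k ∈ Finset.univ \ {k0}, |α k| * |L k i| := by
        apply Finset.sum_congr rfl
        intro k hk
        rw [hoff k (by simpa using (Finset.mem_sdiff.mp hk).2)]
      have hb := hbig i
      rw [h2] at hb
      rw [h1, h3, habs, hxpt i]
      have := (heL i).1
      nlinarith [abs_nonneg (L k0 i)]
    have hx' : ∀ i, 0 ≤ x' i := by
      intro i
      have := hbig' i
      have hnn : 0 ≤ ∑ k, |α' k| * |L k i| :=
        Finset.sum_nonneg fun k _ => mul_nonneg (abs_nonneg _) (abs_nonneg _)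
      linarith
    have hα' : ∀ i, y i - x' i = ∑ k, α' k * L k i := by
      intro i
      have h1 := hsplit (fun k => α' k * L k i)
      have h2 := hsplit (fun k => α k * L k i)
      have h3 : ∑ k ∈ Finset.univ \ {k0}, α' k * L k i
          = ∑ k ∈ Finset.univ \ {k0}, α k * L k i := by
        apply Finset.sum_congr rfl
        intro k hk
        rw [hoff k (by simpa using (Finset.mem_sdiff.mp hk).2)]
      have ha := hα i
      rw [h2] at ha
      rw [h1, h3, hat, hxpt i]
      ring_nf
      ring_nf at ha
      linarith
    obtain ⟨N, q, hq0, hqlast, hqmem, hqstep⟩ := ih x' α' hsum' hx' hα' hbig'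
    have hAx' : A.mulVec x' = A.mulVec x := by
      rw [hx'_def, Matrix.mulVec_add, Matrix.mulVec_smul, hL k0]
      simp
    refine ⟨N + 1, Fin.cons x q, Fin.cons_zero _ _, ?_, ?_, ?_⟩
    · have : Fin.last (N + 1) = Fin.succ (Fin.last N) := rfl
      rw [this, Fin.cons_succ, hqlast]
    · intro j
      refine Fin.cases ?_ ?_ j
      · exact ⟨by simpa using hx, by simp⟩
      · intro j'
        rw [Fin.cons_succ]
        exact ⟨(hqmem j').1, (hqmem j').2.trans hAx'⟩
    · intro j
      refine Fin.cases ?_ ?_ j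
      · refine ⟨k0, ?_⟩
        have h1 : (Fin.cons x q : Fin (N + 1 + 1) → Fin n → ℤ) (Fin.succ 0) = q 0 :=
          Fin.cons_succ _ _ _
        have h0 : (Fin.cons x q : Fin (N + 1 + 1) → Fin n → ℤ) (Fin.castSucc 0) = x := rfl
        rcases he with h | h
        · left
          intro i
          rw [show (0 : Fin (N+1)).succ = Fin.succ 0 from rfl, h1, hq0, h0, hxpt i, h]
          ring
        · right
          intro i
          rw [show (0 : Fin (N+1)).succ = Fin.succ 0 from rfl, h1, hq0, h0, hxpt i, h]
          ring
      · intro j'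
        obtain ⟨k, hk⟩ := hqstep j'
        refine ⟨k, ?_⟩
        have h1 : (Fin.cons x q : Fin (N + 1 + 1) → Fin n → ℤ) (Fin.succ j').succ
            = q j'.succ := Fin.cons_succ _ _ _
        have h2 : (Fin.cons x q : Fin (N + 1 + 1) → Fin n → ℤ) (Fin.succ j').castSucc
            = q j'.castSucc := by
          rw [← Fin.succ_castSucc]
          exact Fin.cons_succ _ _ _
        rw [h1, h2]
        exact hk

/-- If `x, y` are nonnegative tables in the same fiber, `y - x = Σ α_k z_k`
with the `z_k` moves of a lattice basis, and every coordinate of `x` is at least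
`Σ_k |α_k| |z_k(i)|`, then `x` and `y` are connected by a path of nonnegative tables in the
fiber whose steps are `±` elements of the lattice basis. -/
theorem lattice_basis_path (m n K : ℕ) (A : Matrix (Fin m) (Fin n) ℤ)
    (L : Fin K → (Fin n → ℤ)) (hL : ∀ k, A.mulVec (L k) = 0)
    (x y : Fin n → ℤ) (hx : ∀ i, 0 ≤ x i) (hy : ∀ i, 0 ≤ y i)
    (hfiber : A.mulVec x = A.mulVec y)
    (α : Fin K → ℤ) (hα : ∀ i, y i - x i = ∑ k, α k * L k i)
    (hbig : ∀ i, ∑ k, |α k| * |L k i| ≤ x i) :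
    ∃ (N : ℕ) (p : Fin (N + 1) → Fin n → ℤ),
      p 0 = x ∧ p (Fin.last N) = y ∧
      (∀ j, (∀ i, 0 ≤ p j i) ∧ A.mulVec (p j) = A.mulVec x) ∧
      ∀ j : Fin N, ∃ k, (∀ i, p j.succ i - p j.castSucc i = L k i) ∨
        (∀ i, p j.succ i - p j.castSucc i = -L k i) := by
  obtain ⟨N, p, h0, hlast, hmem, hstep⟩ :=
    key_path m n K A L hL y (∑ k, (α k).natAbs) x α rfl hx hα hbig
  exact ⟨N, p, h0, hlast, hmem, hstep⟩
end

section
/- Let A be the configuration of the no-three-factor interaction model for I × J × K tables, mapping a table x ∈ Z^{I×J×K} to its three two-way marginals (x_{ij+}, x_{+jk}, x_{i+k}). Then the degree-four moves which place a 2×2 basic move pattern (+1,-1;-1,+1) in one slice k and its negative in another slice k' form a lattice basis of ker_Z(A): every integer table whose three two-way marginals all vanish is an integer linear combination of such moves. -/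
open Matrix BigOperators

/-- The degree-four move `z(i,i';j,j';k,k')`: a `2×2` basic move pattern in slice `k` and
its negative in slice `k'`. -/
def move4 {I J K : ℕ} (i i' : Fin I) (j j' : Fin J) (k k' : Fin K) :
    Fin I → Fin J → Fin K → ℤ :=
  fun a b c =>
    ((if c = k then 1 else 0) - (if c = k' then 1 else 0)) *
      ((if a = i ∧ b = j then 1 else 0) + (if a = i' ∧ b = j' then 1 else 0)
        - (if a = i ∧ b = j' then 1 else 0) - (if a = i' ∧ b = j then 1 else 0))

/-- The degree-four moves form a lattice basis of the integer kernel of the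
no-three-factor interaction configuration: each such move has vanishing two-way marginals,
and every integer three-way table with vanishing two-way marginals is an integer linear
combination of degree-four moves. -/
theorem degree_four_lattice_basis (I J K : ℕ) :
    (∀ (i i' : Fin I) (j j' : Fin J) (k k' : Fin K),
      (∀ a b, ∑ c, move4 i i' j j' k k' a b c = 0) ∧
      (∀ b c, ∑ a, move4 i i' j j' k k' a b c = 0) ∧
      (∀ a c, ∑ b, move4 i i' j j' k k' a b c = 0)) ∧
    (∀ z : Fin I → Fin J → Fin K → ℤ,
      (∀ a b, ∑ c, z a b c = 0) → (∀ b c, ∑ a, z a b c = 0) → (∀ a c, ∑ b, z a b c = 0) →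
      ∃ c : Fin I × Fin I × Fin J × Fin J × Fin K × Fin K → ℤ,
        z = fun a b c' => ∑ p : Fin I × Fin I × Fin J × Fin J × Fin K × Fin K,
          c p * move4 p.1 p.2.1 p.2.2.1 p.2.2.2.1 p.2.2.2.2.1 p.2.2.2.2.2 a b c') := by
  constructor
  · intro i i' j j' k k'
    refine ⟨fun a b => ?_, fun b c => ?_, fun a c => ?_⟩
    · simp only [move4, ← Finset.sum_mul]
      simp [Finset.sum_sub_distrib]
    · simp only [move4, ← Finset.mul_sum]
      have : ∑ a, ((if a = i ∧ b = j then (1:ℤ) else 0) + (if a = i' ∧ b = j' then 1 else 0)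
          - (if a = i ∧ b = j' then 1 else 0) - (if a = i' ∧ b = j then 1 else 0)) = 0 := by
        simp [ite_and, Finset.sum_sub_distrib, Finset.sum_add_distrib]
      rw [this, mul_zero]
    · simp only [move4, ← Finset.mul_sum]
      have : ∑ b, ((if a = i ∧ b = j then (1:ℤ) else 0) + (if a = i' ∧ b = j' then 1 else 0)
          - (if a = i ∧ b = j' then 1 else 0) - (if a = i' ∧ b = j then 1 else 0)) = 0 := by
        simp [ite_and, Finset.sum_sub_distrib, Finset.sum_add_distrib]
      rw [this, mul_zero]
  · intro z h1 h2 h3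
    rcases Nat.eq_zero_or_pos I with hI | hI
    · exact ⟨0, by funext a b c; exact absurd a.isLt (by omega)⟩
    rcases Nat.eq_zero_or_pos J with hJ | hJ
    · exact ⟨0, by funext a b c; exact absurd b.isLt (by omega)⟩
    rcases Nat.eq_zero_or_pos K with hK | hK
    · exact ⟨0, by funext a b c; exact absurd c.isLt (by omega)⟩
    refine ⟨fun p => if p.2.1 = ⟨0, hI⟩ ∧ p.2.2.2.1 = ⟨0, hJ⟩ ∧ p.2.2.2.2.2 = ⟨0, hK⟩ then
        z p.1 p.2.2.1 p.2.2.2.2.1 else 0, ?_⟩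
    funext a b c
    have collapse : (∑ p : Fin I × Fin I × Fin J × Fin J × Fin K × Fin K,
        (if p.2.1 = ⟨0, hI⟩ ∧ p.2.2.2.1 = ⟨0, hJ⟩ ∧ p.2.2.2.2.2 = ⟨0, hK⟩ then
          z p.1 p.2.2.1 p.2.2.2.2.1 else 0)
          * move4 p.1 p.2.1 p.2.2.1 p.2.2.2.1 p.2.2.2.2.1 p.2.2.2.2.2 a b c)
        = ∑ i, ∑ j, ∑ k, z i j k * move4 i ⟨0, hI⟩ j ⟨0, hJ⟩ k ⟨0, hK⟩ a b c := by
      simp only [Fintype.sum_prod_type]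
      simp only [ite_and, ite_mul, zero_mul]
      simp [Finset.sum_ite_irrel, Finset.sum_ite_eq', Finset.sum_const_zero]
    rw [collapse]
    set i0 : Fin I := ⟨0, hI⟩
    set j0 : Fin J := ⟨0, hJ⟩
    set k0 : Fin K := ⟨0, hK⟩
    have hk : ∀ i j, ∑ k, z i j k * move4 i i0 j j0 k k0 a b c
        = z i j c * ((if a = i ∧ b = j then 1 else 0) + (if a = i0 ∧ b = j0 then 1 else 0)
          - (if a = i ∧ b = j0 then 1 else 0) - (if a = i0 ∧ b = j then 1 else 0)) := by
      intro i j
      simp only [move4, ← mul_assoc]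
      rw [← Finset.sum_mul]
      congr 1
      simp only [mul_sub, Finset.sum_sub_distrib, mul_ite, mul_one, mul_zero]
      rw [Finset.sum_ite_eq]
      simp [Finset.sum_ite_irrel, h1]
    simp only [hk]
    simp only [mul_add, mul_sub, Finset.sum_sub_distrib, Finset.sum_add_distrib,
      mul_ite, mul_one, mul_zero, ite_and]
    simp [Finset.sum_ite_irrel, Finset.sum_ite_eq, Finset.sum_ite_eq', h2, h3]
end

section
/- Let B be an integer n × d matrix whose columns form a lattice basis of ker_Z(A), and consider the r-th Lawrence configuration Λ^(r)(A). For r = 3, the columns of the symmetric matrix [[B, B, 0], [-B, 0, B], [0, -B, -B]] form a lattice basis of ker_Z(Λ^(3)(A)). -/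
open Matrix BigOperators

/-- The third Lawrence configuration of `A`: block rows `(A,0,0)`, `(0,A,0)`, `(I,I,I)`. -/
def Lawrence3 (m n : ℕ) (A : Matrix (Fin m) (Fin n) ℤ) :
    Matrix ((Fin 2 × Fin m) ⊕ Fin n) (Fin 3 × Fin n) ℤ :=
  fun p q =>
    Sum.elim (fun ka : Fin 2 × Fin m =>
        if (q.1 : ℕ) = (ka.1 : ℕ) then A ka.2 q.2 else 0)
      (fun i : Fin n => if q.2 = i then 1 else 0) p

/-- Column `(s, j)` of the symmetric matrix `[[B,B,0],[-B,0,B],[0,-B,-B]]`. -/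
def symCol {n l : ℕ} (B : Matrix (Fin n) (Fin l) ℤ) (s : Fin 3) (j : Fin l) :
    Fin 3 × Fin n → ℤ :=
  fun q =>
    (if (q.1 : ℕ) = (if (s : ℕ) = 2 then 1 else 0) then B q.2 j else 0)
      - (if (q.1 : ℕ) = (if (s : ℕ) = 0 then 1 else 2) then B q.2 j else 0)

/-- If the columns of `B` form a lattice basis of `ker_Z A`, then the columns
of `[[B,B,0],[-B,0,B],[0,-B,-B]]` form a lattice basis of the integer kernel of the third
Lawrence configuration `Λ^(3)(A)`. -/
theorem symmetric_lattice_basis_lawrence3 (m n l : ℕ)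
    (A : Matrix (Fin m) (Fin n) ℤ) (B : Matrix (Fin n) (Fin l) ℤ)
    (hker : ∀ j : Fin l, A.mulVec (fun i => B i j) = 0)
    (hgen : ∀ z : Fin n → ℤ, A.mulVec z = 0 →
      ∃ c : Fin l → ℤ, z = fun i => ∑ j : Fin l, c j * B i j) :
    (∀ (s : Fin 3) (j : Fin l), (Lawrence3 m n A).mulVec (symCol B s j) = 0) ∧
    (∀ z : Fin 3 × Fin n → ℤ, (Lawrence3 m n A).mulVec z = 0 →
      ∃ c : Fin 3 × Fin l → ℤ,
        z = fun q => ∑ p : Fin 3 × Fin l, c p * symCol B p.1 p.2 q) := by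
  have hA : ∀ (a : Fin m) (j : Fin l), ∑ i, A a i * B i j = 0 := by
    intro a j
    have := congrFun (hker j) a
    simpa [Matrix.mulVec, dotProduct] using this
  constructor
  · intro s j
    funext p
    rcases p with ⟨k, a⟩ | i
    · simp only [Matrix.mulVec, dotProduct, Lawrence3, Sum.elim_inl,
        Fintype.sum_prod_type, symCol, Fin.sum_univ_three, Pi.zero_apply]
      fin_cases s <;> fin_cases k <;>
        simp [mul_sub, sub_zero, mul_zero, Finset.sum_sub_distrib, hA]
    · simp only [Matrix.mulVec, dotProduct, Lawrence3, Sum.elim_inr,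
        Fintype.sum_prod_type, symCol, Fin.sum_univ_three, Pi.zero_apply]
      fin_cases s <;> simp [ite_mul, mul_ite, Finset.sum_ite_eq, Finset.sum_ite_eq']
  · intro z hz
    have h0 : ∀ a : Fin m, ∑ i, A a i * z (0, i) = 0 := by
      intro a
      have := congrFun hz (Sum.inl (0, a))
      simpa [Matrix.mulVec, dotProduct, Lawrence3, Fintype.sum_prod_type,
        Fin.sum_univ_three] using this
    have h1 : ∀ a : Fin m, ∑ i, A a i * z (1, i) = 0 := by
      intro a
      have := congrFun hz (Sum.inl (1, a))
      simpa [Matrix.mulVec, dotProduct, Lawrence3, Fintype.sum_prod_type,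
        Fin.sum_univ_three] using this
    have hs : ∀ i : Fin n, z (0, i) + z (1, i) + z (2, i) = 0 := by
      intro i
      have := congrFun hz (Sum.inr i)
      simpa [Matrix.mulVec, dotProduct, Lawrence3, Fintype.sum_prod_type,
        Fin.sum_univ_three, Finset.sum_ite_eq, Finset.sum_ite_eq', add_assoc] using this
    obtain ⟨c0, hc0⟩ := hgen (fun i => z (0, i)) (by
      funext a; simpa [Matrix.mulVec, dotProduct] using h0 a)
    obtain ⟨c1, hc1⟩ := hgen (fun i => z (1, i)) (by
      funext a; simpa [Matrix.mulVec, dotProduct] using h1 a)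
    refine ⟨fun p => ![c0 p.2, 0, c0 p.2 + c1 p.2] p.1, ?_⟩
    funext q
    obtain ⟨t, i⟩ := q
    have e0 : z (0, i) = ∑ j, c0 j * B i j := congrFun hc0 i
    have e1 : z (1, i) = ∑ j, c1 j * B i j := congrFun hc1 i
    have e2 : z (2, i) = -z (0, i) - z (1, i) := by linarith [hs i]
    fin_cases t <;>
      simp [symCol, Fintype.sum_prod_type, Fin.sum_univ_three, mul_sub, sub_zero,
        mul_zero, zero_mul, Finset.sum_sub_distrib, Finset.sum_add_distrib, add_mul,
        e0, e1, e2] <;> ring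
end

section
/- For the binomial (r = 2) logistic regression model with one equally spaced covariate taking J levels, the integer kernel of the configuration is generated as a lattice by the degree-four moves: for indices i2 < i2 + k ≤ i2' - k < i2' in {1,...,J}, the move with entries +1 at (1, i2), (2, i2+k), (2, i2'-k), (1, i2'), and -1 at (2, i2), (1, i2+k), (1, i2'-k), (2, i2'). Equivalently, every 2 × J integer table z such that every column sums to zero, Σ_j z(1,j) = 0, and Σ_j j·z(1,j) = 0 is an integer linear combination of such moves. -/
open Matrix BigOperators

/-- The degree-four move of the binomial logistic regression model determined by the four
column positions `a = i₂ < b = i₂+k ≤ c = i₂'-k < d = i₂'`: first row `+1` at `a, d`,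
`-1` at `b, c`; second row the negative of the first. -/
def logitMove {J : ℕ} (a b c d : Fin J) : Fin 2 → Fin J → ℤ :=
  fun r j =>
    (if r = 0 then 1 else -1) *
      ((if j = a then 1 else 0) + (if j = d then 1 else 0)
        - (if j = b then 1 else 0) - (if j = c then 1 else 0))

namespace Logit14

variable {J : ℕ} (z : Fin 2 → Fin J → ℤ)

def V (z : Fin 2 → Fin J → ℤ) (n : ℕ) : ℤ := if h : n < J then z 0 ⟨n, h⟩ else 0

def S (z : Fin 2 → Fin J → ℤ) (n : ℕ) : ℤ := ∑ i ∈ Finset.range n, V z i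

def T (z : Fin 2 → Fin J → ℤ) (n : ℕ) : ℤ := ∑ i ∈ Finset.range n, S z (i + 1)

lemma sum_V (hrow : ∑ j, z 0 j = 0) : ∑ k ∈ Finset.range J, V z k = 0 := by
  rw [← Fin.sum_univ_eq_sum_range (fun n => V z n) J]
  rw [← hrow]
  exact Finset.sum_congr rfl (fun i _ => by simp [V, i.isLt])

lemma S_ge (hrow : ∑ j, z 0 j = 0) (m : ℕ) (h : J ≤ m) : S z m = 0 := by
  obtain ⟨k, rfl⟩ := Nat.exists_eq_add_of_le h
  induction k with
  | zero => exact sum_V z hrow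
  | succ k ih =>
    have : S z (J + (k+1)) = S z (J + k) + V z (J + k) := by
      rw [← Nat.add_assoc]; exact Finset.sum_range_succ _ _
    rw [this, ih (by omega), V, dif_neg (by omega)]; ring

lemma T_eq (n : ℕ) : T z n = ∑ k ∈ Finset.range n, ((n : ℤ) - k) * V z k := by
  induction n with
  | zero => simp [T]
  | succ n ih =>
    have h1 : T z (n+1) = T z n + S z (n+1) := Finset.sum_range_succ _ n
    have h2 : S z (n+1) = S z n + V z n := Finset.sum_range_succ _ n
    rw [h1, ih, h2, Finset.sum_range_succ]
    push_cast
    have h3 : ∀ k ∈ Finset.range n, ((n:ℤ) + 1 - (k:ℤ)) * V z k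
        = ((n:ℤ) - k) * V z k + V z k := fun k _ => by ring
    rw [Finset.sum_congr rfl h3, Finset.sum_add_distrib]
    have hs : S z n = ∑ k ∈ Finset.range n, V z k := rfl
    rw [hs]; ring

lemma T_J (hrow : ∑ j, z 0 j = 0) (hw : ∑ j : Fin J, ((j : ℤ) + 1) * z 0 j = 0) :
    T z J = 0 := by
  have hw' : ∑ k ∈ Finset.range J, ((k : ℤ) + 1) * V z k = 0 := by
    rw [← Fin.sum_univ_eq_sum_range (fun n => ((n : ℤ) + 1) * V z n) J, ← hw]
    exact Finset.sum_congr rfl (fun i _ => by simp [V, i.isLt])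
  have h0 : ∑ k ∈ Finset.range J, V z k = 0 := sum_V z hrow
  rw [T_eq]
  have h3 : ∀ k ∈ Finset.range J, ((J : ℤ) - k) * V z k
      = ((J : ℤ) + 1) * V z k - ((k : ℤ) + 1) * V z k := fun k _ => by ring
  rw [Finset.sum_congr rfl h3, Finset.sum_sub_distrib, ← Finset.mul_sum, h0, hw']
  ring

lemma T_ge (hrow : ∑ j, z 0 j = 0) (hw : ∑ j : Fin J, ((j : ℤ) + 1) * z 0 j = 0)
    (m : ℕ) (h : J - 1 ≤ m) : T z m = 0 := by
  obtain ⟨k, rfl⟩ := Nat.exists_eq_add_of_le h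
  have base : T z (J - 1) = 0 := by
    rcases Nat.eq_zero_or_pos J with hJ | hJ
    · simp [T, hJ]
    · have hTJ : T z J = 0 := T_J z hrow hw
      have : T z J = T z (J - 1) + S z (J - 1 + 1) := by
        have h4 : T z J = ∑ i ∈ Finset.range (J - 1 + 1), S z (i + 1) := by
          rw [Nat.sub_add_cancel hJ]; rfl
        rw [h4]; exact Finset.sum_range_succ _ _
      rw [this, S_ge z hrow _ (by omega)] at hTJ
      omega
  induction k with
  | zero => exact base
  | succ k ih =>
    have : T z (J - 1 + (k+1)) = T z (J - 1 + k) + S z (J - 1 + k + 1) := by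
      rw [← Nat.add_assoc]; exact Finset.sum_range_succ _ _
    rw [this, ih (by omega), S_ge z hrow _ (by omega)]; ring

lemma V_eq (n : ℕ) : V z n = T z (n + 1) - 2 * T z n + T z (n - 1) := by
  cases n with
  | zero =>
    have h1 : T z 1 = S z 1 := Finset.sum_range_one _
    have h2 : S z 1 = V z 0 := Finset.sum_range_one _
    simp [T, h1, h2]
  | succ m =>
    have h1 : T z (m + 2) = T z (m + 1) + S z (m + 2) := Finset.sum_range_succ _ _
    have h2 : T z (m + 1) = T z m + S z (m + 1) := Finset.sum_range_succ _ _
    have h3 : S z (m + 2) = S z (m + 1) + V z (m + 1) := Finset.sum_range_succ _ _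
    simp only [Nat.add_sub_cancel]
    rw [h1, h2, h3]; ring

lemma sum_shift (δ jv : ℕ) (hjv : jv < J) (F : ℕ → ℤ) :
    (∑ n ∈ Finset.range J, if jv = n + δ then F n else 0)
      = if δ ≤ jv then F (jv - δ) else 0 := by
  by_cases h : δ ≤ jv
  · rw [if_pos h]
    have hc : ∀ n ∈ Finset.range J, (if jv = n + δ then F n else 0)
        = (if jv - δ = n then F n else 0) :=
      fun n _ => if_congr (by omega) rfl rfl
    rw [Finset.sum_congr rfl hc, Finset.sum_ite_eq, if_pos (Finset.mem_range.2 (by omega))]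
  · rw [if_neg h, Finset.sum_eq_zero]
    exact fun n _ => if_neg (by omega)

def E (jv n : ℕ) : ℤ :=
  (if jv = n then 1 else 0) - 2 * (if jv = n + 1 then 1 else 0)
    + (if jv = n + 2 then 1 else 0)

lemma key_nat (hrow : ∑ j, z 0 j = 0) (hw : ∑ j : Fin J, ((j : ℤ) + 1) * z 0 j = 0)
    (jv : ℕ) (hjv : jv < J) :
    (∑ n ∈ Finset.range J, if n + 2 < J then T z (n + 1) * E jv n else 0) = V z jv := by
  have h0 : ∀ n ∈ Finset.range J, (if n + 2 < J then T z (n + 1) * E jv n else 0)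
      = T z (n + 1) * E jv n := by
    intro n _
    by_cases h : n + 2 < J
    · rw [if_pos h]
    · rw [if_neg h, T_ge z hrow hw (n + 1) (by omega), zero_mul]
  rw [Finset.sum_congr rfl h0]
  have hsplit : ∀ n ∈ Finset.range J, T z (n + 1) * E jv n
      = (if jv = n then T z (n + 1) else 0) - 2 * (if jv = n + 1 then T z (n + 1) else 0)
        + (if jv = n + 2 then T z (n + 1) else 0) := by
    intro n _
    unfold E
    split_ifs <;> ring
  rw [Finset.sum_congr rfl hsplit, Finset.sum_add_distrib, Finset.sum_sub_distrib,
    ← Finset.mul_sum]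
  have hA : (∑ n ∈ Finset.range J, if jv = n then T z (n + 1) else 0) = T z (jv + 1) := by
    rw [Finset.sum_ite_eq, if_pos (Finset.mem_range.2 hjv)]
  have hB : (∑ n ∈ Finset.range J, if jv = n + 1 then T z (n + 1) else 0) = T z jv := by
    rw [sum_shift 1 jv hjv]
    by_cases h : 1 ≤ jv
    · rw [if_pos h, Nat.sub_add_cancel h]
    · rw [if_neg h]
      have : jv = 0 := by omega
      simp [this, T]
  have hC : (∑ n ∈ Finset.range J, if jv = n + 2 then T z (n + 1) else 0) = T z (jv - 1) := by
    rw [sum_shift 2 jv hjv]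
    by_cases h : 2 ≤ jv
    · rw [if_pos h, show jv - 2 + 1 = jv - 1 by omega]
    · rw [if_neg h, show jv - 1 = 0 by omega]
      simp [T]
  rw [hA, hB, hC, ← V_eq]

def P (q : Fin J × Fin J × Fin J × Fin J) : Prop :=
  (q.2.1 : ℕ) = (q.1 : ℕ) + 1 ∧ (q.2.2.1 : ℕ) = (q.1 : ℕ) + 1 ∧
    (q.2.2.2 : ℕ) = (q.1 : ℕ) + 2

instance (q : Fin J × Fin J × Fin J × Fin J) : Decidable (P q) := by
  unfold P; infer_instance

def coeff (z : Fin 2 → Fin J → ℤ) (q : Fin J × Fin J × Fin J × Fin J) : ℤ :=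
  if P q then T z ((q.1 : ℕ) + 1) else 0

end Logit14

open Logit14 in
/-- For the binomial logistic regression model with one equally spaced
covariate with `J` levels, every `2 × J` integer table whose columns sum to zero, whose
first row sums to zero and has vanishing weighted sum `Σ_j j·z(1,j)`, is an integer linear
combination of the degree-four moves with positions `a < b ≤ c < d`, `b - a = d - c`. -/
theorem logistic_degree_four_lattice_basis (J : ℕ) (z : Fin 2 → Fin J → ℤ)
    (hcol : ∀ j, ∑ r, z r j = 0)
    (hrow : ∑ j, z 0 j = 0)
    (hw : ∑ j : Fin J, ((j : ℤ) + 1) * z 0 j = 0) :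
    ∃ c : {q : Fin J × Fin J × Fin J × Fin J //
        q.1 < q.2.1 ∧ q.2.1 ≤ q.2.2.1 ∧ q.2.2.1 < q.2.2.2 ∧
        (q.2.1 : ℕ) - (q.1 : ℕ) = (q.2.2.2 : ℕ) - (q.2.2.1 : ℕ)} → ℤ,
      z = fun r j => ∑ q, c q * logitMove q.1.1 q.1.2.1 q.1.2.2.1 q.1.2.2.2 r j := by
  classical
  set pred : Fin J × Fin J × Fin J × Fin J → Prop := fun q =>
    q.1 < q.2.1 ∧ q.2.1 ≤ q.2.2.1 ∧ q.2.2.1 < q.2.2.2 ∧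
      (q.2.1 : ℕ) - (q.1 : ℕ) = (q.2.2.2 : ℕ) - (q.2.2.1 : ℕ) with hpred
  refine ⟨fun q => coeff z q.1, ?_⟩
  have key : ∀ j : Fin J,
      (∑ q : {q // pred q}, coeff z q.1 *
        logitMove q.1.1 q.1.2.1 q.1.2.2.1 q.1.2.2.2 0 j) = z 0 j := by
    intro j
    have e1 : (∑ q : {q // pred q}, coeff z q.1 *
          logitMove q.1.1 q.1.2.1 q.1.2.2.1 q.1.2.2.2 0 j)
        = ∑ x ∈ Finset.univ.filter pred,
            coeff z x * logitMove x.1 x.2.1 x.2.2.1 x.2.2.2 0 j :=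
      (Finset.sum_subtype (Finset.univ.filter pred)
        (fun x => by simp only [Finset.mem_filter, Finset.mem_univ, true_and])
        (fun x => coeff z x * logitMove x.1 x.2.1 x.2.2.1 x.2.2.2 0 j)).symm
    rw [e1]
    have e2 : ∀ x ∈ Finset.univ.filter pred,
        coeff z x * logitMove x.1 x.2.1 x.2.2.1 x.2.2.2 0 j
          = if P x then T z ((x.1 : ℕ) + 1) * logitMove x.1 x.2.1 x.2.2.1 x.2.2.2 0 j
            else 0 := by
      intro x _
      unfold coeff
      split_ifs <;> ring
    rw [Finset.sum_congr rfl e2, ← Finset.sum_filter, Finset.filter_filter]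
    have e3 : (Finset.univ.filter fun a => pred a ∧ P a) = Finset.univ.filter P := by
      apply Finset.filter_congr
      intro x _
      constructor
      · exact fun h => h.2
      · rintro h
        obtain ⟨h1, h2, h3⟩ := h
        refine ⟨⟨?_, ?_, ?_, ?_⟩, ⟨h1, h2, h3⟩⟩
        · exact Fin.lt_def.2 (by omega)
        · exact Fin.le_def.2 (by omega)
        · exact Fin.lt_def.2 (by omega)
        · omega
    rw [e3]
    have e4 : (∑ x ∈ Finset.univ.filter P,
          T z ((x.1 : ℕ) + 1) * logitMove x.1 x.2.1 x.2.2.1 x.2.2.2 0 j)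
        = ∑ a ∈ Finset.univ.filter (fun a : Fin J => (a : ℕ) + 2 < J),
            T z ((a : ℕ) + 1) * E (j : ℕ) (a : ℕ) := by
      refine Finset.sum_bij (fun x _ => x.1) ?_ ?_ ?_ ?_
      · intro x hx
        simp only [Finset.mem_filter, Finset.mem_univ, true_and] at hx ⊢
        obtain ⟨h1, h2, h3⟩ := hx
        have := x.2.2.2.isLt
        omega
      · rintro ⟨a₁, b₁, c₁, d₁⟩ h₁ ⟨a₂, b₂, c₂, d₂⟩ h₂ heq
        simp only [Finset.mem_filter, Finset.mem_univ, true_and, P] at h₁ h₂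
        simp only at heq
        subst heq
        simp only [Prod.mk.injEq, true_and]
        refine ⟨Fin.ext (by omega), Fin.ext (by omega), Fin.ext (by omega)⟩
      · intro a ha
        simp only [Finset.mem_filter, Finset.mem_univ, true_and] at ha
        exact ⟨(a, ⟨(a : ℕ) + 1, by omega⟩, ⟨(a : ℕ) + 1, by omega⟩, ⟨(a : ℕ) + 2, by omega⟩),
          by simp [P], rfl⟩
      · rintro ⟨a, b, c, d⟩ hx
        simp only [Finset.mem_filter, Finset.mem_univ, true_and, P] at hx
        obtain ⟨h1, h2, h3⟩ := hx
        simp only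
        congr 1
        have hm : logitMove a b c d 0 j
            = (if j = a then 1 else 0) + (if j = d then 1 else 0)
              - (if j = b then 1 else 0) - (if j = c then 1 else 0) := by
          simp [logitMove]
        rw [hm]
        simp only [E, Fin.ext_iff, h1, h2, h3]
        ring
    rw [e4, Finset.sum_filter,
      Fin.sum_univ_eq_sum_range
        (fun n => if n + 2 < J then T z (n + 1) * E (j : ℕ) n else 0) J,
      key_nat z hrow hw (j : ℕ) j.isLt]
    simp [V]
  funext r j
  have hr : r = 0 ∨ r = 1 := by omega
  rcases hr with rfl | rfl
  · exact (key j).symm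
  · have h01 : z 0 j + z 1 j = 0 := by
      have := hcol j
      rwa [Fin.sum_univ_two] at this
    have hneg : ∀ q : {q // pred q},
        coeff z q.1 * logitMove q.1.1 q.1.2.1 q.1.2.2.1 q.1.2.2.2 1 j
          = -(coeff z q.1 * logitMove q.1.1 q.1.2.1 q.1.2.2.1 q.1.2.2.2 0 j) := by
      intro q
      have : logitMove q.1.1 q.1.2.1 q.1.2.2.1 q.1.2.2.2 1 j
          = -(logitMove q.1.1 q.1.2.1 q.1.2.2.1 q.1.2.2.2 0 j) := by
        simp [logitMove]
      rw [this]; ring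
    have : (∑ q : {q // pred q},
        coeff z q.1 * logitMove q.1.1 q.1.2.1 q.1.2.2.1 q.1.2.2.2 1 j)
          = -(∑ q : {q // pred q},
        coeff z q.1 * logitMove q.1.1 q.1.2.1 q.1.2.2.1 q.1.2.2.2 0 j) := by
      rw [← Finset.sum_neg_distrib]
      exact Finset.sum_congr rfl (fun q _ => hneg q)
    rw [this, key j]
    omega
end

section
/- Let A be a 1 × J integer matrix with entries A_{1j} = j for j = 1, ..., J (Poisson regression type configuration with intercept omitted), augmented with a row of ones, i.e., the configuration A' with rows (1,...,1) and (1,2,...,J). Then the moves z_j = e_j - 2e_{j+1} + e_{j+2} for j = 1, ..., J-2 form a lattice basis of ker_Z(A'): every integer vector z ∈ Z^J with Σ_j z_j = 0 and Σ_j j·z_j = 0 is an integer linear combination of the z_j. -/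
open Matrix BigOperators

/-- Auxiliary sequence: `Uaux Z` is the double partial sum of `Z`, characterized by
`U 0 = U 1 = 0` and the recurrence `U (n+2) - 2 U (n+1) + U n = Z n`. -/
def Uaux (Z : ℕ → ℤ) : ℕ → ℤ
  | 0 => 0
  | 1 => 0
  | (n+2) => 2 * Uaux Z (n+1) - Uaux Z n + Z n

lemma Uaux_diff (Z : ℕ → ℤ) : ∀ n, Uaux Z (n+1) - Uaux Z n = ∑ i ∈ Finset.range n, Z i := by
  intro n
  induction n with
  | zero => simp [Uaux]
  | succ n ih =>
    rw [Finset.sum_range_succ, ← ih]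
    show Uaux Z (n+2) - _ = _
    rw [show Uaux Z (n+2) = 2 * Uaux Z (n+1) - Uaux Z n + Z n from rfl]
    ring

lemma Uaux_eq (Z : ℕ → ℤ) : ∀ n, Uaux Z n = ∑ i ∈ Finset.range n, ((n:ℤ) - 1 - (i:ℤ)) * Z i := by
  intro n
  induction n with
  | zero => simp [Uaux]
  | succ n ih =>
    have h := Uaux_diff Z n
    have h2 : Uaux Z (n+1) = Uaux Z n + ∑ i ∈ Finset.range n, Z i := by linarith
    rw [h2, ih, Finset.sum_range_succ, ← Finset.sum_add_distrib]
    push_cast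
    have : ∀ i ∈ Finset.range n, ((n:ℤ) - 1 - (i:ℤ)) * Z i + Z i = ((n:ℤ) + 1 - 1 - (i:ℤ)) * Z i := by
      intro i _; ring
    rw [Finset.sum_congr rfl this]
    simp

lemma sum_shift (m k n : ℕ) (f : ℕ → ℤ) :
    (∑ j ∈ Finset.range m, if n = j + k then f j else 0)
      = if k ≤ n ∧ n - k < m then f (n - k) else 0 := by
  by_cases h : k ≤ n
  · have step : ∀ j ∈ Finset.range m,
        (if n = j + k then f j else 0) = (if n - k = j then f j else 0) := by
      intro j _
      exact if_congr (by omega) rfl rfl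
    rw [Finset.sum_congr rfl step, Finset.sum_ite_eq (Finset.range m) (n-k) f]
    simp [Finset.mem_range, h]
  · rw [Finset.sum_eq_zero, if_neg (by omega)]
    intro j _; rw [if_neg (by omega)]

/-- The move `z_j = e_j - 2 e_{j+1} + e_{j+2}` of the Poisson regression configuration. -/
def poissonMove {J : ℕ} (j : Fin (J - 2)) : Fin J → ℤ :=
  fun i =>
    (if (i : ℕ) = (j : ℕ) then 1 else 0) - 2 * (if (i : ℕ) = (j : ℕ) + 1 then 1 else 0)
      + (if (i : ℕ) = (j : ℕ) + 2 then 1 else 0)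

/-- The moves `z_j = e_j - 2 e_{j+1} + e_{j+2}`, `j = 1,…,J-2`, form a
lattice basis of the integer kernel of the configuration with rows `(1,…,1)` and
`(1,2,…,J)`: each move is in the kernel, and every `z ∈ ℤ^J` with `Σ_j z_j = 0` and
`Σ_j j·z_j = 0` is an integer linear combination of them. -/
theorem poisson_regression_lattice_basis (J : ℕ) :
    (∀ j : Fin (J - 2),
      (∑ i : Fin J, poissonMove j i) = 0 ∧
      (∑ i : Fin J, ((i : ℤ) + 1) * poissonMove j i) = 0) ∧
    (∀ z : Fin J → ℤ,
      (∑ i, z i) = 0 → (∑ i : Fin J, ((i : ℤ) + 1) * z i) = 0 →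
      ∃ c : Fin (J - 2) → ℤ, z = fun i => ∑ j, c j * poissonMove j i) := by
  constructor
  · intro j
    have hj : (j:ℕ) + 2 < J := by have := j.2; omega
    constructor
    · simp only [poissonMove]
      rw [Fin.sum_univ_eq_sum_range (fun n => (if n = (j:ℕ) then (1:ℤ) else 0)
        - 2*(if n = (j:ℕ)+1 then 1 else 0) + (if n = (j:ℕ)+2 then 1 else 0)) J]
      rw [Finset.sum_add_distrib, Finset.sum_sub_distrib, ← Finset.mul_sum]
      rw [Finset.sum_ite_eq', Finset.sum_ite_eq', Finset.sum_ite_eq']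
      simp only [Finset.mem_range]
      rw [if_pos (by omega), if_pos (by omega), if_pos (by omega)]
      ring
    · simp only [poissonMove]
      rw [Fin.sum_univ_eq_sum_range (fun n => ((n:ℤ)+1) * ((if n = (j:ℕ) then (1:ℤ) else 0)
        - 2*(if n = (j:ℕ)+1 then 1 else 0) + (if n = (j:ℕ)+2 then 1 else 0))) J]
      simp only [mul_sub, mul_add, mul_ite, mul_one, mul_zero]
      rw [Finset.sum_add_distrib, Finset.sum_sub_distrib]
      rw [Finset.sum_ite_eq', Finset.sum_ite_eq', Finset.sum_ite_eq']
      simp only [Finset.mem_range]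
      rw [if_pos (by omega), if_pos (by omega), if_pos (by omega)]
      push_cast
      ring
  · intro z h1 h2
    set Z : ℕ → ℤ := fun n => if h : n < J then z ⟨n, h⟩ else 0 with hZ
    have hZeq : ∀ i : Fin J, Z (i : ℕ) = z i := by
      intro i; simp [hZ, i.2]
    have h1' : ∑ n ∈ Finset.range J, Z n = 0 := by
      rw [← Fin.sum_univ_eq_sum_range Z J]
      simp only [hZeq]; exact h1
    have h2' : ∑ n ∈ Finset.range J, ((n:ℤ)+1) * Z n = 0 := by
      rw [← Fin.sum_univ_eq_sum_range (fun n => ((n:ℤ)+1) * Z n) J]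
      simp only [hZeq]; exact h2
    have hUJ : Uaux Z J = 0 := by
      rw [Uaux_eq]
      have step : ∀ n ∈ Finset.range J,
          ((J:ℤ) - 1 - (n:ℤ)) * Z n = (J:ℤ) * Z n - ((n:ℤ)+1) * Z n := by
        intro n _; ring
      rw [Finset.sum_congr rfl step, Finset.sum_sub_distrib, ← Finset.mul_sum, h1', h2']
      ring
    have hUJ1 : Uaux Z (J+1) = 0 := by
      rw [Uaux_eq, Finset.sum_range_succ]
      have hZJ : Z J = 0 := by simp [hZ]
      rw [hZJ, mul_zero, add_zero]
      have step : ∀ n ∈ Finset.range J,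
          ((((J+1):ℕ):ℤ) - 1 - (n:ℤ)) * Z n = ((J:ℤ)+1) * Z n - ((n:ℤ)+1) * Z n := by
        intro n _; push_cast; ring
      rw [Finset.sum_congr rfl step, Finset.sum_sub_distrib,
        ← Finset.mul_sum, h1', h2']
      ring
    refine ⟨fun j => Uaux Z ((j:ℕ)+2), ?_⟩
    funext i
    have hi : (i:ℕ) < J := i.2
    simp only [poissonMove]
    rw [Fin.sum_univ_eq_sum_range (fun jn => Uaux Z (jn+2) * ((if (i:ℕ) = jn then (1:ℤ) else 0)
      - 2*(if (i:ℕ) = jn+1 then 1 else 0) + (if (i:ℕ) = jn+2 then 1 else 0))) (J-2)]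
    simp only [mul_sub, mul_add, mul_ite, mul_one, mul_zero]
    rw [Finset.sum_add_distrib, Finset.sum_sub_distrib]
    rw [Finset.sum_ite_eq (Finset.range (J-2)) (i:ℕ) (fun jn => Uaux Z (jn+2))]
    rw [sum_shift (J-2) 1 (i:ℕ) (fun jn => Uaux Z (jn+2) * 2)]
    rw [sum_shift (J-2) 2 (i:ℕ) (fun jn => Uaux Z (jn+2))]
    simp only [Finset.mem_range]
    have key : Uaux Z ((i:ℕ) + 2) = 2 * Uaux Z ((i:ℕ)+1) - Uaux Z (i:ℕ) + Z (i:ℕ) := rfl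
    have e1 : (if (i:ℕ) < J - 2 then Uaux Z ((i:ℕ)+2) else 0) = Uaux Z ((i:ℕ)+2) := by
      split_ifs with h
      · rfl
      · have : (i:ℕ) + 2 = J ∨ (i:ℕ) + 2 = J + 1 := by omega
        rcases this with h' | h' <;> rw [h']
        · exact hUJ.symm
        · exact hUJ1.symm
    have e2 : (if 1 ≤ (i:ℕ) ∧ (i:ℕ) - 1 < J - 2 then Uaux Z ((i:ℕ)-1+2) * 2 else 0)
        = 2 * Uaux Z ((i:ℕ)+1) := by
      split_ifs with h
      · rw [show (i:ℕ) - 1 + 2 = (i:ℕ) + 1 by omega]; ring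
      · have : (i:ℕ) = 0 ∨ (i:ℕ) + 1 = J := by omega
        rcases this with h' | h'
        · rw [h']; show (0:ℤ) = 2 * Uaux Z 1; rw [show Uaux Z 1 = 0 from rfl]; ring
        · rw [h', hUJ]; ring
    have e3 : (if 2 ≤ (i:ℕ) ∧ (i:ℕ) - 2 < J - 2 then Uaux Z ((i:ℕ)-2+2) else 0)
        = Uaux Z (i:ℕ) := by
      split_ifs with h
      · congr 1; omega
      · have : (i:ℕ) = 0 ∨ (i:ℕ) = 1 := by omega
        rcases this with h' | h' <;> rw [h']
        · exact (show Uaux Z 0 = 0 from rfl).symm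
        · exact (show Uaux Z 1 = 0 from rfl).symm
    rw [e1, e2, e3, key, ← hZeq i]
    ring
end
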